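/- Stationarity from the decoupled ansatz: under the hypotheses of the decoupling lemma, and assuming additionally the gain condition Λ(T_{k+1}, Π²*) + Υ(T_{k+1})Π¹*_k = 0 and offset condition Υ(T_{k+1})Σ¹*_k + Φ(T_{k+1}, Π²*, φ_{k+1}) = 0 for all k, the process y_k = T_k x*_k + φ_k satisfies the stationarity condition B_kᵀE[y_{k+1}|F_{k−1}] + E_kᵀE[y_{k+1}ω_k|F_{k−1}] + L_k x*_k + R_k u*_k + ρ_k = 0 almost surely for all k ∈ {0,…,N−1}. -/

import Mathlib

open Matrix MeasureTheory Finset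

/-- Entrywise conditional expectation of a random vector. -/
noncomputable def cexpV {Ω : Type} {m0 : MeasurableSpace Ω} (μ : Measure Ω)
    (G : MeasurableSpace Ω) {n : ℕ} (f : Ω → Fin n → ℝ) : Ω → Fin n → ℝ :=
  fun w i => (μ[fun v => f v i | G]) w

/-- Entrywise conditional expectation of a random matrix. -/
noncomputable def cexpM {Ω : Type} {m0 : MeasurableSpace Ω} (μ : Measure Ω)
    (G : MeasurableSpace Ω) {a b : ℕ} (T : Ω → Matrix (Fin a) (Fin b) ℝ) :
    Ω → Matrix (Fin a) (Fin b) ℝ :=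
  fun w => Matrix.of fun i j => (μ[fun v => T v i j | G]) w

/-- `Υ(T) = R + BᵀE[T|F]B + BᵀE[Tω|F]E + EᵀE[Tω|F]B + EᵀE[Tω²|F]E` (Appendix A). -/
noncomputable def UpsOp {Ω : Type} {m0 : MeasurableSpace Ω} (μ : Measure Ω)
    (G : MeasurableSpace Ω) {n m : ℕ} (wn : Ω → ℝ) (R : Ω → Matrix (Fin m) (Fin m) ℝ)
    (B E : Ω → Matrix (Fin n) (Fin m) ℝ) (T : Ω → Matrix (Fin n) (Fin n) ℝ) :
    Ω → Matrix (Fin m) (Fin m) ℝ := fun w =>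
  R w + (B w)ᵀ * cexpM μ G T w * B w
    + (B w)ᵀ * cexpM μ G (fun v => wn v • T v) w * E w
    + (E w)ᵀ * cexpM μ G (fun v => wn v • T v) w * B w
    + (E w)ᵀ * cexpM μ G (fun v => wn v ^ 2 • T v) w * E w

/-- `Λ(T, Π²) = L + BᵀE[T|F](A+CΠ²) + EᵀE[Tω|F](A+CΠ²) + BᵀE[Tω|F](D+FΠ²)
    + EᵀE[Tω²|F](D+FΠ²)` (Appendix A). -/
noncomputable def LamOp {Ω : Type} {m0 : MeasurableSpace Ω} (μ : Measure Ω)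
    (G : MeasurableSpace Ω) {n m l : ℕ} (wn : Ω → ℝ) (L : Ω → Matrix (Fin m) (Fin n) ℝ)
    (A D : Ω → Matrix (Fin n) (Fin n) ℝ) (B E : Ω → Matrix (Fin n) (Fin m) ℝ)
    (C F : Ω → Matrix (Fin n) (Fin l) ℝ) (P2 : Ω → Matrix (Fin l) (Fin n) ℝ)
    (T : Ω → Matrix (Fin n) (Fin n) ℝ) : Ω → Matrix (Fin m) (Fin n) ℝ := fun w =>
  L w + (B w)ᵀ * cexpM μ G T w * (A w + C w * P2 w)
    + (E w)ᵀ * cexpM μ G (fun v => wn v • T v) w * (A w + C w * P2 w)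
    + (B w)ᵀ * cexpM μ G (fun v => wn v • T v) w * (D w + F w * P2 w)
    + (E w)ᵀ * cexpM μ G (fun v => wn v ^ 2 • T v) w * (D w + F w * P2 w)

/-- `Δ(T, Π²)` of Appendix A. -/
noncomputable def DelOp {Ω : Type} {m0 : MeasurableSpace Ω} (μ : Measure Ω)
    (G : MeasurableSpace Ω) {n l : ℕ} (wn : Ω → ℝ) (Q : Ω → Matrix (Fin n) (Fin n) ℝ)
    (A D : Ω → Matrix (Fin n) (Fin n) ℝ) (C F : Ω → Matrix (Fin n) (Fin l) ℝ)
    (P2 : Ω → Matrix (Fin l) (Fin n) ℝ) (T : Ω → Matrix (Fin n) (Fin n) ℝ) :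
    Ω → Matrix (Fin n) (Fin n) ℝ := fun w =>
  Q w + (A w + C w * P2 w)ᵀ * cexpM μ G T w * (A w + C w * P2 w)
    + (A w + C w * P2 w)ᵀ * cexpM μ G (fun v => wn v • T v) w * (D w + F w * P2 w)
    + (D w + F w * P2 w)ᵀ * cexpM μ G (fun v => wn v • T v) w * (A w + C w * P2 w)
    + (D w + F w * P2 w)ᵀ * cexpM μ G (fun v => wn v ^ 2 • T v) w * (D w + F w * P2 w)

/-- `Φ(T, Π², φ)` of Appendix A (affine term of the stationarity condition). -/
noncomputable def PhiOp {Ω : Type} {m0 : MeasurableSpace Ω} (μ : Measure Ω)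
    (G : MeasurableSpace Ω) {n m l : ℕ} (wn : Ω → ℝ) (ρ : Ω → Fin m → ℝ)
    (B E : Ω → Matrix (Fin n) (Fin m) ℝ) (C F : Ω → Matrix (Fin n) (Fin l) ℝ)
    (bb sg : Ω → Fin n → ℝ) (S2 : Ω → Fin l → ℝ)
    (T : Ω → Matrix (Fin n) (Fin n) ℝ) (φ : Ω → Fin n → ℝ) : Ω → Fin m → ℝ := fun w =>
  ρ w + (B w)ᵀ *ᵥ (cexpM μ G T w *ᵥ (C w *ᵥ S2 w + bb w)
      + cexpM μ G (fun v => wn v • T v) w *ᵥ (F w *ᵥ S2 w + sg w)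
      + cexpV μ G φ w)
    + (E w)ᵀ *ᵥ (cexpM μ G (fun v => wn v • T v) w *ᵥ (C w *ᵥ S2 w + bb w)
      + cexpM μ G (fun v => wn v ^ 2 • T v) w *ᵥ (F w *ᵥ S2 w + sg w)
      + cexpV μ G (fun v => wn v • φ v) w)

/-- `Θ(T, Π², φ)` of Appendix A (affine term of the backward equation). -/
noncomputable def ThetaOp {Ω : Type} {m0 : MeasurableSpace Ω} (μ : Measure Ω)
    (G : MeasurableSpace Ω) {n l : ℕ} (wn : Ω → ℝ) (q : Ω → Fin n → ℝ)
    (A D : Ω → Matrix (Fin n) (Fin n) ℝ) (C F : Ω → Matrix (Fin n) (Fin l) ℝ)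
    (P2 : Ω → Matrix (Fin l) (Fin n) ℝ) (bb sg : Ω → Fin n → ℝ) (S2 : Ω → Fin l → ℝ)
    (T : Ω → Matrix (Fin n) (Fin n) ℝ) (φ : Ω → Fin n → ℝ) : Ω → Fin n → ℝ := fun w =>
  q w + (A w + C w * P2 w)ᵀ *ᵥ (cexpM μ G T w *ᵥ (C w *ᵥ S2 w + bb w)
      + cexpM μ G (fun v => wn v • T v) w *ᵥ (F w *ᵥ S2 w + sg w)
      + cexpV μ G φ w)
    + (D w + F w * P2 w)ᵀ *ᵥ (cexpM μ G (fun v => wn v • T v) w *ᵥ (C w *ᵥ S2 w + bb w)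
      + cexpM μ G (fun v => wn v ^ 2 • T v) w *ᵥ (F w *ᵥ S2 w + sg w)
      + cexpV μ G (fun v => wn v • φ v) w)


namespace Stmt17Aux

variable {Ω : Type} {m0 : MeasurableSpace Ω} {μ : Measure Ω} [IsProbabilityMeasure μ]
  {G : MeasurableSpace Ω}

lemma integrable_mul_L2 {f g : Ω → ℝ} (hf : MemLp f 2 μ) (hg : MemLp g 2 μ) :
    Integrable (fun w => f w * g w) μ := by
  have h : MemLp (f • g) 1 μ := hg.smul hf
  rw [memLp_one_iff_integrable] at h
  exact h

lemma memLp_bdd_mul {f g : Ω → ℝ} {C : ℝ} (hg : MemLp g 2 μ)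
    (hf : AEStronglyMeasurable[m0] f μ) (hbd : ∀ w, |f w| ≤ C) :
    MemLp (fun w => f w * g w) 2 μ := by
  have hftop : MemLp f ⊤ μ :=
    memLp_top_of_bound hf C (Filter.Eventually.of_forall fun w => by simpa using hbd w)
  have h : MemLp (f • g) 2 μ := hg.smul hftop
  exact h

lemma integrable_bdd_meas {f : Ω → ℝ} {C : ℝ} (hf : AEStronglyMeasurable[m0] f μ)
    (hbd : ∀ w, |f w| ≤ C) : Integrable f μ :=
  (memLp_top_of_bound hf C (Filter.Eventually.of_forall fun w => by simpa using hbd w)).integrable le_top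

lemma integrable_bdd_mul_left {f g : Ω → ℝ} {C : ℝ} (hg : Integrable g μ)
    (hf : AEStronglyMeasurable[m0] f μ) (hbd : ∀ w, |f w| ≤ C) :
    Integrable (fun w => g w * f w) μ :=
  (hg.bdd_mul hf (Filter.Eventually.of_forall fun w => by simpa using hbd w)).congr
    (Filter.Eventually.of_forall fun w => mul_comm _ _)

/-- Key integrability lemma: if `E[X|G] = 1` with `X ≥ 0` and `g ≥ 0` is `G`-measurable
and integrable, then `X * g` is integrable. -/
lemma integrable_mul_of_condexp_one (hG : G ≤ m0)
    {X g : Ω → ℝ} (hXint : Integrable X μ) (hX0 : ∀ w, 0 ≤ X w)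
    (hc : μ[X|G] =ᵐ[μ] fun _ => 1)
    (hgm : StronglyMeasurable[G] g) (hgint : Integrable g μ) (hg0 : ∀ w, 0 ≤ g w) :
    Integrable (fun w => X w * g w) μ := by
  have hgm0 : AEStronglyMeasurable[m0] g μ := (hgm.mono hG).aestronglyMeasurable
  set gn : ℕ → Ω → ℝ := fun nn w => min (g w) nn with hgn
  have hgnm : ∀ nn, StronglyMeasurable[G] (gn nn) :=
    fun nn => (hgm.measurable.min measurable_const).stronglyMeasurable
  have hgnle : ∀ nn w, gn nn w ≤ g w := fun nn w => min_le_left _ _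
  have hgn0 : ∀ nn w, 0 ≤ gn nn w := fun nn w => le_min (hg0 w) (Nat.cast_nonneg nn)
  have hgnint : ∀ nn, Integrable (gn nn) μ := by
    intro nn
    refine hgint.mono' ((hgnm nn).mono hG).aestronglyMeasurable ?_
    refine Filter.Eventually.of_forall fun w => ?_
    rw [Real.norm_eq_abs, abs_of_nonneg (hgn0 nn w)]
    exact hgnle nn w
  have hXgn : ∀ nn, Integrable (fun w => gn nn w * X w) μ := by
    intro nn
    refine hXint.bdd_mul (c := nn) ((hgnm nn).mono hG).aestronglyMeasurable ?_
    refine Filter.Eventually.of_forall fun w => ?_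
    rw [Real.norm_eq_abs, abs_of_nonneg (hgn0 nn w)]
    exact min_le_right _ _
  have hint_le : ∀ nn, ∫ w, gn nn w * X w ∂μ ≤ ∫ w, g w ∂μ := by
    intro nn
    have h1 : μ[fun w => gn nn w * X w|G] =ᵐ[μ] fun w => gn nn w * (μ[X|G]) w :=
      condExp_mul_of_stronglyMeasurable_left (hgnm nn) (hXgn nn) hXint
    have h2 : μ[fun w => gn nn w * X w|G] =ᵐ[μ] gn nn := by
      filter_upwards [h1, hc] with w hw1 hw2
      rw [hw1, hw2]; simp
    calc ∫ w, gn nn w * X w ∂μ = ∫ w, (μ[fun w => gn nn w * X w|G]) w ∂μ :=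
          (integral_condExp hG).symm
      _ = ∫ w, gn nn w ∂μ := integral_congr_ae h2
      _ ≤ ∫ w, g w ∂μ := integral_mono (hgnint nn) hgint fun w => hgnle nn w
  refine ⟨hXint.1.mul hgm0, ?_⟩
  rw [hasFiniteIntegral_iff_ofReal
    (Filter.Eventually.of_forall fun w => mul_nonneg (hX0 w) (hg0 w))]
  have hsup : ∀ w, (⨆ nn, ENNReal.ofReal (X w * gn nn w)) = ENNReal.ofReal (X w * g w) := by
    intro w
    refine le_antisymm (iSup_le fun nn => ENNReal.ofReal_le_ofReal
      (mul_le_mul_of_nonneg_left (hgnle nn w) (hX0 w))) ?_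
    refine le_iSup_of_le ⌈g w⌉₊ (le_of_eq ?_)
    have : gn ⌈g w⌉₊ w = g w := min_eq_left (Nat.le_ceil _)
    rw [this]
  have hmono : ∀ᵐ w ∂μ, Monotone fun nn => ENNReal.ofReal (X w * gn nn w) := by
    refine Filter.Eventually.of_forall fun w a b hab => ?_
    refine ENNReal.ofReal_le_ofReal (mul_le_mul_of_nonneg_left ?_ (hX0 w))
    exact min_le_min le_rfl (Nat.cast_le.mpr hab)
  have hmeas : ∀ nn, AEMeasurable (fun w => ENNReal.ofReal (X w * gn nn w)) μ := by
    intro nn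
    exact (ENNReal.measurable_ofReal.comp_aemeasurable
      (((hXgn nn).1.aemeasurable).congr (Filter.Eventually.of_forall fun w => mul_comm _ _)))
  calc ∫⁻ w, ENNReal.ofReal (X w * g w) ∂μ
      = ∫⁻ w, ⨆ nn, ENNReal.ofReal (X w * gn nn w) ∂μ := by
        refine lintegral_congr fun w => (hsup w).symm
    _ = ⨆ nn, ∫⁻ w, ENNReal.ofReal (X w * gn nn w) ∂μ := lintegral_iSup' hmeas hmono
    _ ≤ ENNReal.ofReal (∫ w, g w ∂μ) := by
        refine iSup_le fun nn => ?_
        rw [← ofReal_integral_eq_lintegral_ofReal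
          ((hXgn nn).congr (Filter.Eventually.of_forall fun w => mul_comm _ _))
          (Filter.Eventually.of_forall fun w => mul_nonneg (hX0 w) (hgn0 nn w))]
        exact ENNReal.ofReal_le_ofReal (by
          have := hint_le nn
          calc ∫ w, X w * gn nn w ∂μ = ∫ w, gn nn w * X w ∂μ :=
                integral_congr_ae (Filter.Eventually.of_forall fun w => mul_comm _ _)
            _ ≤ ∫ w, g w ∂μ := this)
    _ < ⊤ := ENNReal.ofReal_lt_top


lemma abs_mul_entry_le {a b c : ℕ} {M : Matrix (Fin a) (Fin b) ℝ}
    {P : Matrix (Fin b) (Fin c) ℝ} {C1 C2 : ℝ} (h1 : ∀ i j, |M i j| ≤ C1)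
    (h2 : ∀ i j, |P i j| ≤ C2) : ∀ i j, |(M * P) i j| ≤ b * (C1 * C2) := by
  intro i j
  rw [Matrix.mul_apply]
  calc |∑ q, M i q * P q j| ≤ ∑ q, |M i q * P q j| := Finset.abs_sum_le_sum_abs _ _
    _ ≤ ∑ _q : Fin b, C1 * C2 := by
        refine Finset.sum_le_sum fun q _ => ?_
        rw [abs_mul]
        exact mul_le_mul (h1 i q) (h2 q j) (abs_nonneg _)
          ((abs_nonneg (M i q)).trans (h1 i q))
    _ = b * (C1 * C2) := by simp [Finset.sum_const, mul_comm]

lemma sm_mul_entry {a b c : ℕ} {G' : MeasurableSpace Ω}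
    {M : Ω → Matrix (Fin a) (Fin b) ℝ} {P : Ω → Matrix (Fin b) (Fin c) ℝ}
    (h1 : ∀ i j, StronglyMeasurable[G'] fun w => M w i j)
    (h2 : ∀ i j, StronglyMeasurable[G'] fun w => P w i j) :
    ∀ i j, StronglyMeasurable[G'] fun w => (M w * P w) i j := by
  intro i j
  simp only [Matrix.mul_apply]
  exact (Finset.measurable_sum Finset.univ fun q _ =>
    ((h1 i q).measurable.mul (h2 q j).measurable)).stronglyMeasurable

/-- Entries of `M *ᵥ v` are `G`-strongly measurable and in `L²` when `M` has bounded
measurable entries and `v` has `L²` measurable entries. -/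
lemma mulVec_entry_smL2 {a b : ℕ} {G' : MeasurableSpace Ω} (hG' : G' ≤ m0)
    {M : Ω → Matrix (Fin a) (Fin b) ℝ} {v : Ω → Fin b → ℝ} {C : ℝ}
    (hM : ∀ i j, StronglyMeasurable[G'] fun w => M w i j)
    (hMb : ∀ w i j, |M w i j| ≤ C)
    (hv : ∀ j, StronglyMeasurable[G'] fun w => v w j)
    (hvL : ∀ j, MemLp (fun w => v w j) 2 μ) :
    ∀ i, StronglyMeasurable[G'] (fun w => (M w *ᵥ v w) i) ∧
      MemLp (fun w => (M w *ᵥ v w) i) 2 μ := by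
  intro i
  have heq : (fun w => (M w *ᵥ v w) i) = fun w => ∑ j, M w i j * v w j := by
    funext w; simp [Matrix.mulVec, dotProduct]
  rw [heq]
  constructor
  · exact (Finset.measurable_sum Finset.univ fun q _ =>
      ((hM i q).measurable.mul (hv q).measurable)).stronglyMeasurable
  · exact memLp_finset_sum Finset.univ fun j _ =>
      memLp_bdd_mul (hvL j) ((hM i j).mono hG').aestronglyMeasurable fun w => hMb w i j

/-- Conditional expectation of `T1 *ᵥ h + T2 *ᵥ g + ψ` with `h, g` `G`-measurable. -/
lemma cexpV_combo (hG : G ≤ m0) {n : ℕ}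
    (T1 T2 : Ω → Matrix (Fin n) (Fin n) ℝ) (h g ψ : Ω → Fin n → ℝ)
    (hhm : ∀ j, StronglyMeasurable[G] fun w => h w j)
    (hgm : ∀ j, StronglyMeasurable[G] fun w => g w j)
    (hT1 : ∀ i j, Integrable (fun w => T1 w i j) μ)
    (hT2 : ∀ i j, Integrable (fun w => T2 w i j) μ)
    (hT1h : ∀ i j, Integrable (fun w => h w j * T1 w i j) μ)
    (hT2g : ∀ i j, Integrable (fun w => g w j * T2 w i j) μ)
    (hψ : ∀ i, Integrable (fun w => ψ w i) μ) :
    cexpV μ G (fun v => T1 v *ᵥ h v + T2 v *ᵥ g v + ψ v) =ᵐ[μ]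
      fun w => cexpM μ G T1 w *ᵥ h w + cexpM μ G T2 w *ᵥ g w + cexpV μ G ψ w := by
  have key : ∀ i : Fin n,
      (fun w => cexpV μ G (fun v => T1 v *ᵥ h v + T2 v *ᵥ g v + ψ v) w i) =ᵐ[μ]
      fun w => (cexpM μ G T1 w *ᵥ h w) i + (cexpM μ G T2 w *ᵥ g w) i
        + cexpV μ G ψ w i := by
    intro i
    have heq : (fun v => (T1 v *ᵥ h v + T2 v *ᵥ g v + ψ v) i)
        = fun v => ((∑ j, h v j * T1 v i j) + ∑ j, g v j * T2 v i j) + ψ v i := by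
      funext v
      simp [Matrix.mulVec, dotProduct, mul_comm]
    have hint1 : Integrable (fun v => ∑ j, h v j * T1 v i j) μ :=
      integrable_finset_sum _ fun j _ => hT1h i j
    have hint2 : Integrable (fun v => ∑ j, g v j * T2 v i j) μ :=
      integrable_finset_sum _ fun j _ => hT2g i j
    have step1 : μ[fun v => (T1 v *ᵥ h v + T2 v *ᵥ g v + ψ v) i|G] =ᵐ[μ]
        fun w => (μ[fun v => ∑ j, h v j * T1 v i j|G]) w
          + (μ[fun v => ∑ j, g v j * T2 v i j|G]) w + (μ[fun v => ψ v i|G]) w := by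
      rw [heq]
      refine (condExp_add (hint1.add hint2) (hψ i) G).trans ?_
      filter_upwards [condExp_add hint1 hint2 G] with w hw
      simp only [Pi.add_apply] at hw ⊢
      rw [hw]
    have sum1 : μ[fun v => ∑ j, h v j * T1 v i j|G] =ᵐ[μ]
        fun w => ∑ j, h w j * (μ[fun v => T1 v i j|G]) w := by
      have hfs : (fun v => ∑ j, h v j * T1 v i j)
          = ∑ j : Fin n, fun v => h v j * T1 v i j := by
        funext v; simp
      rw [hfs]
      refine (condExp_finset_sum (fun j _ => hT1h i j) G).trans ?_
      have : ∀ j : Fin n, μ[fun v => h v j * T1 v i j|G] =ᵐ[μ]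
          fun w => h w j * (μ[fun v => T1 v i j|G]) w :=
        fun j => condExp_mul_of_stronglyMeasurable_left (hhm j) (hT1h i j) (hT1 i j)
      filter_upwards [ae_all_iff.mpr this] with w hw
      simp only [Finset.sum_apply]
      exact Finset.sum_congr rfl fun j _ => hw j
    have sum2 : μ[fun v => ∑ j, g v j * T2 v i j|G] =ᵐ[μ]
        fun w => ∑ j, g w j * (μ[fun v => T2 v i j|G]) w := by
      have hfs : (fun v => ∑ j, g v j * T2 v i j)
          = ∑ j : Fin n, fun v => g v j * T2 v i j := by
        funext v; simp
      rw [hfs]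
      refine (condExp_finset_sum (fun j _ => hT2g i j) G).trans ?_
      have : ∀ j : Fin n, μ[fun v => g v j * T2 v i j|G] =ᵐ[μ]
          fun w => g w j * (μ[fun v => T2 v i j|G]) w :=
        fun j => condExp_mul_of_stronglyMeasurable_left (hgm j) (hT2g i j) (hT2 i j)
      filter_upwards [ae_all_iff.mpr this] with w hw
      simp only [Finset.sum_apply]
      exact Finset.sum_congr rfl fun j _ => hw j
    filter_upwards [step1, sum1, sum2] with w hw1 hw2 hw3
    show (μ[fun v => (T1 v *ᵥ h v + T2 v *ᵥ g v + ψ v) i|G]) w = _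
    rw [hw1, hw2, hw3]
    simp only [cexpM, cexpV, Matrix.mulVec, dotProduct, Matrix.of_apply]
    congr 1
    · congr 1
      · exact Finset.sum_congr rfl fun j _ => mul_comm _ _
      · exact Finset.sum_congr rfl fun j _ => mul_comm _ _
  filter_upwards [ae_all_iff.mpr key] with w hw
  funext i
  exact hw i

end Stmt17Aux


/-- stationarity from the decoupled ansatz. Under the hypotheses of the
decoupling lemma, if additionally the gain condition `Λ(T_{k+1},Π²*) + Υ(T_{k+1})Π¹* = 0`
and the offset condition `Υ(T_{k+1})Σ¹* + Φ(T_{k+1},Π²*,φ_{k+1}) = 0` hold, then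
`y_k = T_k x*_k + φ_k` satisfies the stationarity condition
`BᵀE[y_{k+1}|F] + EᵀE[y_{k+1}ω|F] + L x* + R u* + ρ = 0` a.s. for all `k < N`. -/
theorem stmt17
    {Ω : Type} [m0 : MeasurableSpace Ω] (μ : Measure Ω) [IsProbabilityMeasure μ]
    {n m l : ℕ} (N : ℕ)
    (G : ℕ → MeasurableSpace Ω) (hGle : ∀ k, G k ≤ m0) (hGmono : Monotone G)
    (wk : ℕ → Ω → ℝ)
    (hwmeas : ∀ k, StronglyMeasurable[G (k + 1)] (wk k))
    (hwint : ∀ k, Integrable (wk k) μ) (hw2int : ∀ k, Integrable (fun w => wk k w ^ 2) μ)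
    (hw0 : ∀ k, μ[wk k | G k] =ᵐ[μ] fun _ => 0)
    (hw2 : ∀ k, μ[(fun w => wk k w ^ 2) | G k] =ᵐ[μ] fun _ => 1)
    (A D : ℕ → Ω → Matrix (Fin n) (Fin n) ℝ) (B E : ℕ → Ω → Matrix (Fin n) (Fin m) ℝ)
    (C F : ℕ → Ω → Matrix (Fin n) (Fin l) ℝ) (bb sg : ℕ → Ω → Fin n → ℝ)
    (Q : ℕ → Ω → Matrix (Fin n) (Fin n) ℝ) (L : ℕ → Ω → Matrix (Fin m) (Fin n) ℝ)
    (R : ℕ → Ω → Matrix (Fin m) (Fin m) ℝ)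
    (q : ℕ → Ω → Fin n → ℝ) (ρ : ℕ → Ω → Fin m → ℝ)
    (GN : Ω → Matrix (Fin n) (Fin n) ℝ) (gN : Ω → Fin n → ℝ)
    (Cb : ℝ)
    (hmeas : ∀ k < N, ∀ i j,
      StronglyMeasurable[G k] (fun w => A k w i j) ∧
      StronglyMeasurable[G k] (fun w => D k w i j) ∧
      StronglyMeasurable[G k] (fun w => Q k w i j))
    (hmeasBE : ∀ k < N, ∀ i j,
      StronglyMeasurable[G k] (fun w => B k w i j) ∧
      StronglyMeasurable[G k] (fun w => E k w i j))
    (hmeasCF : ∀ k < N, ∀ i j,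
      StronglyMeasurable[G k] (fun w => C k w i j) ∧
      StronglyMeasurable[G k] (fun w => F k w i j))
    (hmeasLR : ∀ k < N, (∀ i j, StronglyMeasurable[G k] (fun w => L k w i j)) ∧
      ∀ i j, StronglyMeasurable[G k] (fun w => R k w i j))
    (hbd : ∀ k < N, ∀ w, (∀ i j, |A k w i j| ≤ Cb) ∧ (∀ i j, |D k w i j| ≤ Cb) ∧
      (∀ i j, |B k w i j| ≤ Cb) ∧ (∀ i j, |E k w i j| ≤ Cb) ∧
      (∀ i j, |C k w i j| ≤ Cb) ∧ (∀ i j, |F k w i j| ≤ Cb) ∧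
      (∀ i j, |Q k w i j| ≤ Cb) ∧ (∀ i j, |L k w i j| ≤ Cb) ∧ ∀ i j, |R k w i j| ≤ Cb)
    (hvecmeas : ∀ k < N, ∀ i,
      StronglyMeasurable[G k] (fun w => bb k w i) ∧
      StronglyMeasurable[G k] (fun w => sg k w i) ∧
      StronglyMeasurable[G k] (fun w => q k w i))
    (hρmeas : ∀ k < N, ∀ i, StronglyMeasurable[G k] (fun w => ρ k w i))
    (hvecL2 : ∀ k < N, ∀ i, MemLp (fun w => bb k w i) 2 μ ∧
      MemLp (fun w => sg k w i) 2 μ ∧ MemLp (fun w => q k w i) 2 μ)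
    (hρL2 : ∀ k < N, ∀ i, MemLp (fun w => ρ k w i) 2 μ)
    (hGNmeas : ∀ i j, StronglyMeasurable[G N] (fun w => GN w i j))
    (hGNbd : ∀ w i j, |GN w i j| ≤ Cb)
    (hgNmeas : ∀ i, StronglyMeasurable[G N] (fun w => gN w i))
    (hgNL2 : ∀ i, MemLp (fun w => gN w i) 2 μ)
    -- equilibrium feedback gains (essentially bounded, adapted) and offsets (admissible)
    (P1s : ℕ → Ω → Matrix (Fin m) (Fin n) ℝ) (P2s : ℕ → Ω → Matrix (Fin l) (Fin n) ℝ)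
    (S1s : ℕ → Ω → Fin m → ℝ) (S2s : ℕ → Ω → Fin l → ℝ) (CbP : ℝ)
    (hP1meas : ∀ k < N, ∀ i j, StronglyMeasurable[G k] (fun w => P1s k w i j))
    (hP2meas : ∀ k < N, ∀ i j, StronglyMeasurable[G k] (fun w => P2s k w i j))
    (hP1bd : ∀ k < N, ∀ w i j, |P1s k w i j| ≤ CbP)
    (hP2bd : ∀ k < N, ∀ w i j, |P2s k w i j| ≤ CbP)
    (hS1meas : ∀ k < N, ∀ i, StronglyMeasurable[G k] (fun w => S1s k w i))
    (hS2meas : ∀ k < N, ∀ i, StronglyMeasurable[G k] (fun w => S2s k w i))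
    (hS1L2 : ∀ k < N, ∀ i, MemLp (fun w => S1s k w i) 2 μ)
    (hS2L2 : ∀ k < N, ∀ i, MemLp (fun w => S2s k w i) 2 μ)
    -- the Riccati-type process T and the offset process φ
    (T : ℕ → Ω → Matrix (Fin n) (Fin n) ℝ) (φ : ℕ → Ω → Fin n → ℝ) (CbT : ℝ)
    (hTmeas : ∀ k ≤ N, ∀ i j, StronglyMeasurable[G k] (fun w => T k w i j))
    (hTbd : ∀ k ≤ N, ∀ w i j, |T k w i j| ≤ CbT)
    (hφmeas : ∀ k ≤ N, ∀ i, StronglyMeasurable[G k] (fun w => φ k w i))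
    (hφL2 : ∀ k ≤ N, ∀ i, MemLp (fun w => φ k w i) 2 μ)
    (hTN : T N = GN) (hφN : φ N = gN)
    -- the Lyapunov-type backward equation for T
    (hLyap : ∀ k < N, T k =ᵐ[μ] fun w =>
      DelOp μ (G k) (wk k) (Q k) (A k) (D k) (C k) (F k) (P2s k) (T (k + 1)) w
        + (P1s k w)ᵀ
            * UpsOp μ (G k) (wk k) (R k) (B k) (E k) (T (k + 1)) w * P1s k w
        + (LamOp μ (G k) (wk k) (L k) (A k) (D k) (B k) (E k) (C k) (F k) (P2s k)
            (T (k + 1)) w)ᵀ * P1s k w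
        + (P1s k w)ᵀ * LamOp μ (G k) (wk k) (L k) (A k) (D k) (B k) (E k) (C k) (F k)
            (P2s k) (T (k + 1)) w)
    -- the backward equation for φ
    (hφeq : ∀ k < N, φ k =ᵐ[μ] fun w =>
      ThetaOp μ (G k) (wk k) (q k) (A k) (D k) (C k) (F k) (P2s k) (bb k) (sg k)
          (S2s k) (T (k + 1)) (φ (k + 1)) w
        + (LamOp μ (G k) (wk k) (L k) (A k) (D k) (B k) (E k) (C k) (F k) (P2s k)
            (T (k + 1)) w)ᵀ *ᵥ S1s k w)
    -- the closed-loop state trajectory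
    (ξ : Fin n → ℝ) (x : ℕ → Ω → Fin n → ℝ)
    (hx0 : ∀ w, x 0 w = ξ)
    (hxrec : ∀ k < N, ∀ w, x (k + 1) w
      = (A k w + B k w * P1s k w + C k w * P2s k w) *ᵥ x k w
        + B k w *ᵥ S1s k w + C k w *ᵥ S2s k w + bb k w
        + wk k w • ((D k w + E k w * P1s k w + F k w * P2s k w) *ᵥ x k w
            + E k w *ᵥ S1s k w + F k w *ᵥ S2s k w + sg k w))
    -- gain condition
    (hgain : ∀ k < N, ∀ᵐ w ∂μ,
      LamOp μ (G k) (wk k) (L k) (A k) (D k) (B k) (E k) (C k) (F k) (P2s k)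
          (T (k + 1)) w
        + UpsOp μ (G k) (wk k) (R k) (B k) (E k) (T (k + 1)) w * P1s k w = 0)
    -- offset condition
    (hoff : ∀ k < N, ∀ᵐ w ∂μ,
      UpsOp μ (G k) (wk k) (R k) (B k) (E k) (T (k + 1)) w *ᵥ S1s k w
        + PhiOp μ (G k) (wk k) (ρ k) (B k) (E k) (C k) (F k) (bb k) (sg k) (S2s k)
            (T (k + 1)) (φ (k + 1)) w = 0) :
    ∀ k < N, ∀ᵐ w ∂μ,
      (B k w)ᵀ
          *ᵥ cexpV μ (G k) (fun v => T (k + 1) v *ᵥ x (k + 1) v + φ (k + 1) v) w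
        + (E k w)ᵀ
          *ᵥ cexpV μ (G k)
              (fun v => wk k v • (T (k + 1) v *ᵥ x (k + 1) v + φ (k + 1) v)) w
        + L k w *ᵥ x k w + R k w *ᵥ (P1s k w *ᵥ x k w + S1s k w) + ρ k w = 0 := by
  classical
  -- abbreviations for the closed-loop drift and diffusion affine parts
  set Hf : ℕ → Ω → Fin n → ℝ := fun j w =>
    (A j w + B j w * P1s j w + C j w * P2s j w) *ᵥ x j w
      + B j w *ᵥ S1s j w + C j w *ᵥ S2s j w + bb j w with hHf
  set Gf : ℕ → Ω → Fin n → ℝ := fun j w =>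
    (D j w + E j w * P1s j w + F j w * P2s j w) *ᵥ x j w
      + E j w *ᵥ S1s j w + F j w *ᵥ S2s j w + sg j w with hGf
  have hxdec : ∀ j, j < N → ∀ w, x (j + 1) w = Hf j w + wk j w • Gf j w := by
    intro j hj w
    simp only [hHf, hGf]
    exact hxrec j hj w
  -- properties of Hf, Gf given properties of x j
  have hHGprop : ∀ j, j < N →
      (∀ i, StronglyMeasurable[G j] (fun w => x j w i) ∧
        MemLp (fun w => x j w i) 2 μ) →
      (∀ p, StronglyMeasurable[G j] (fun w => Hf j w p) ∧
        MemLp (fun w => Hf j w p) 2 μ) ∧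
      (∀ p, StronglyMeasurable[G j] (fun w => Gf j w p) ∧
        MemLp (fun w => Gf j w p) 2 μ) := by
    intro j hj hx
    have hb := hbd j hj
    have hxSM : ∀ p, StronglyMeasurable[G j] fun w => x j w p := fun p => (hx p).1
    have hxL : ∀ p, MemLp (fun w => x j w p) 2 μ := fun p => (hx p).2
    -- drift matrix
    have hMh_sm : ∀ i p, StronglyMeasurable[G j]
        fun w => (A j w + B j w * P1s j w + C j w * P2s j w) i p := by
      intro i p
      have h1 := (hmeas j hj i p).1
      have h2 := Stmt17Aux.sm_mul_entry (fun i q => (hmeasBE j hj i q).1)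
        (hP1meas j hj) i p
      have h3 := Stmt17Aux.sm_mul_entry (fun i q => (hmeasCF j hj i q).1)
        (hP2meas j hj) i p
      have heq : (fun w => (A j w + B j w * P1s j w + C j w * P2s j w) i p)
          = fun w => A j w i p + (B j w * P1s j w) i p + (C j w * P2s j w) i p := by
        funext w; simp [Matrix.add_apply]
      rw [heq]
      exact (h1.add h2).add h3
    have hMh_bd : ∀ w i p, |(A j w + B j w * P1s j w + C j w * P2s j w) i p|
        ≤ Cb + (m * (Cb * CbP) + l * (Cb * CbP)) := by
      intro w i p
      have h1 := (hb w).1 i p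
      have h2 := Stmt17Aux.abs_mul_entry_le (fun i q => (hb w).2.2.1 i q)
        (fun i q => hP1bd j hj w i q) i p
      have h3 := Stmt17Aux.abs_mul_entry_le (fun i q => (hb w).2.2.2.2.1 i q)
        (fun i q => hP2bd j hj w i q) i p
      have heq : (A j w + B j w * P1s j w + C j w * P2s j w) i p
          = A j w i p + ((B j w * P1s j w) i p + (C j w * P2s j w) i p) := by
        simp [Matrix.add_apply]; ring
      rw [heq]
      calc |A j w i p + ((B j w * P1s j w) i p + (C j w * P2s j w) i p)|
          ≤ |A j w i p| + |(B j w * P1s j w) i p + (C j w * P2s j w) i p| :=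
            abs_add_le _ _
        _ ≤ |A j w i p| + (|(B j w * P1s j w) i p| + |(C j w * P2s j w) i p|) := by
            exact add_le_add le_rfl (abs_add_le _ _)
        _ ≤ Cb + (m * (Cb * CbP) + l * (Cb * CbP)) := by
            exact add_le_add h1 (add_le_add h2 h3)
    -- diffusion matrix
    have hMg_sm : ∀ i p, StronglyMeasurable[G j]
        fun w => (D j w + E j w * P1s j w + F j w * P2s j w) i p := by
      intro i p
      have h1 := (hmeas j hj i p).2.1
      have h2 := Stmt17Aux.sm_mul_entry (fun i q => (hmeasBE j hj i q).2)
        (hP1meas j hj) i p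
      have h3 := Stmt17Aux.sm_mul_entry (fun i q => (hmeasCF j hj i q).2)
        (hP2meas j hj) i p
      have heq : (fun w => (D j w + E j w * P1s j w + F j w * P2s j w) i p)
          = fun w => D j w i p + (E j w * P1s j w) i p + (F j w * P2s j w) i p := by
        funext w; simp [Matrix.add_apply]
      rw [heq]
      exact (h1.add h2).add h3
    have hMg_bd : ∀ w i p, |(D j w + E j w * P1s j w + F j w * P2s j w) i p|
        ≤ Cb + (m * (Cb * CbP) + l * (Cb * CbP)) := by
      intro w i p
      have h1 := (hb w).2.1 i p
      have h2 := Stmt17Aux.abs_mul_entry_le (fun i q => (hb w).2.2.2.1 i q)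
        (fun i q => hP1bd j hj w i q) i p
      have h3 := Stmt17Aux.abs_mul_entry_le (fun i q => (hb w).2.2.2.2.2.1 i q)
        (fun i q => hP2bd j hj w i q) i p
      have heq : (D j w + E j w * P1s j w + F j w * P2s j w) i p
          = D j w i p + ((E j w * P1s j w) i p + (F j w * P2s j w) i p) := by
        simp [Matrix.add_apply]; ring
      rw [heq]
      calc |D j w i p + ((E j w * P1s j w) i p + (F j w * P2s j w) i p)|
          ≤ |D j w i p| + |(E j w * P1s j w) i p + (F j w * P2s j w) i p| :=
            abs_add_le _ _
        _ ≤ |D j w i p| + (|(E j w * P1s j w) i p| + |(F j w * P2s j w) i p|) := by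
            exact add_le_add le_rfl (abs_add_le _ _)
        _ ≤ Cb + (m * (Cb * CbP) + l * (Cb * CbP)) := by
            exact add_le_add h1 (add_le_add h2 h3)
    have hMhx := Stmt17Aux.mulVec_entry_smL2 (μ := μ) (hGle j) hMh_sm hMh_bd hxSM hxL
    have hMgx := Stmt17Aux.mulVec_entry_smL2 (μ := μ) (hGle j) hMg_sm hMg_bd hxSM hxL
    have hBS1 := Stmt17Aux.mulVec_entry_smL2 (μ := μ) (hGle j)
      (fun i q => (hmeasBE j hj i q).1) (fun w i q => (hb w).2.2.1 i q)
      (hS1meas j hj) (hS1L2 j hj)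
    have hES1 := Stmt17Aux.mulVec_entry_smL2 (μ := μ) (hGle j)
      (fun i q => (hmeasBE j hj i q).2) (fun w i q => (hb w).2.2.2.1 i q)
      (hS1meas j hj) (hS1L2 j hj)
    have hCS2 := Stmt17Aux.mulVec_entry_smL2 (μ := μ) (hGle j)
      (fun i q => (hmeasCF j hj i q).1) (fun w i q => (hb w).2.2.2.2.1 i q)
      (hS2meas j hj) (hS2L2 j hj)
    have hFS2 := Stmt17Aux.mulVec_entry_smL2 (μ := μ) (hGle j)
      (fun i q => (hmeasCF j hj i q).2) (fun w i q => (hb w).2.2.2.2.2.1 i q)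
      (hS2meas j hj) (hS2L2 j hj)
    constructor
    · intro p
      have heq : (fun w => Hf j w p) = fun w =>
          ((A j w + B j w * P1s j w + C j w * P2s j w) *ᵥ x j w) p
            + (B j w *ᵥ S1s j w) p + (C j w *ᵥ S2s j w) p + bb j w p := by
        funext w; simp only [hHf, Pi.add_apply]
      rw [heq]
      refine ⟨(((hMhx p).1.add (hBS1 p).1).add (hCS2 p).1).add
        (hvecmeas j hj p).1, ?_⟩
      exact (((hMhx p).2.add (hBS1 p).2).add (hCS2 p).2).add (hvecL2 j hj p).1
    · intro p
      have heq : (fun w => Gf j w p) = fun w =>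
          ((D j w + E j w * P1s j w + F j w * P2s j w) *ᵥ x j w) p
            + (E j w *ᵥ S1s j w) p + (F j w *ᵥ S2s j w) p + sg j w p := by
        funext w; simp only [hGf, Pi.add_apply]
      rw [heq]
      refine ⟨(((hMgx p).1.add (hES1 p).1).add (hFS2 p).1).add
        (hvecmeas j hj p).2.1, ?_⟩
      exact (((hMgx p).2.add (hES1 p).2).add (hFS2 p).2).add (hvecL2 j hj p).2.1
  -- the state is adapted with square integrable entries
  have hxprop : ∀ j, j ≤ N → ∀ i, StronglyMeasurable[G j] (fun w => x j w i) ∧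
      MemLp (fun w => x j w i) 2 μ := by
    intro j
    induction j with
    | zero =>
      intro _ i
      have heq : (fun w => x 0 w i) = fun _ => ξ i := by
        funext w; rw [hx0]
      rw [heq]
      exact ⟨stronglyMeasurable_const, memLp_const (ξ i)⟩
    | succ j ih =>
      intro hj i
      have hjN : j < N := Nat.lt_of_succ_le hj
      have hx := ih (le_of_lt hjN)
      obtain ⟨hH, hG2⟩ := hHGprop j hjN hx
      have heq : (fun w => x (j + 1) w i) = fun w => Hf j w i + wk j w * Gf j w i := by
        funext w; rw [hxdec j hjN w]; simp
      rw [heq]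
      constructor
      · exact (((hH i).1.mono (hGmono (Nat.le_succ j))).add
          ((hwmeas j).mul ((hG2 i).1.mono (hGmono (Nat.le_succ j)))))
      · refine ((hH i).2.add ?_)
        have haesm : AEStronglyMeasurable (fun w => wk j w * Gf j w i) μ :=
          (hwint j).1.mul ((hG2 i).1.mono (hGle j)).aestronglyMeasurable
        have hsm2 : StronglyMeasurable[G j] fun w => (Gf j w i) ^ 2 := by
          have heqs : (fun w => (Gf j w i) ^ 2) = fun w => Gf j w i * Gf j w i := by
            funext w; ring
          rw [heqs]
          exact ((hG2 i).1.measurable.mul (hG2 i).1.measurable).stronglyMeasurable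
        have hint2 : Integrable (fun w => (Gf j w i) ^ 2) μ :=
          (memLp_two_iff_integrable_sq
            ((hG2 i).1.mono (hGle j)).aestronglyMeasurable).mp (hG2 i).2
        have hint : Integrable (fun w => wk j w ^ 2 * (Gf j w i) ^ 2) μ :=
          Stmt17Aux.integrable_mul_of_condexp_one (hGle j) (hw2int j)
            (fun w => sq_nonneg _) (hw2 j) hsm2 hint2 (fun w => sq_nonneg _)
        exact (memLp_two_iff_integrable_sq haesm).mpr
          (hint.congr (Filter.Eventually.of_forall fun w => by ring))
  -- main argument
  intro k hk
  have hGk : G k ≤ m0 := hGle k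
  have hk1 : k + 1 ≤ N := Nat.succ_le_of_lt hk
  obtain ⟨hH, hG2⟩ := hHGprop k hk (hxprop k (le_of_lt hk))
  have hTsm : ∀ i j, StronglyMeasurable[G (k + 1)] fun w => T (k + 1) w i j :=
    hTmeas (k + 1) hk1
  have hTaesm : ∀ i j, AEStronglyMeasurable (fun w => T (k + 1) w i j) μ :=
    fun i j => ((hTsm i j).mono (hGle (k + 1))).aestronglyMeasurable
  have hTb : ∀ w i j, |T (k + 1) w i j| ≤ CbT := hTbd (k + 1) hk1
  have hwaesm : AEStronglyMeasurable (wk k) μ := (hwint k).1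
  have hwL2 : MemLp (wk k) 2 μ := (memLp_two_iff_integrable_sq hwaesm).mpr (hw2int k)
  have hφsm : ∀ i, StronglyMeasurable[G (k + 1)] fun w => φ (k + 1) w i :=
    hφmeas (k + 1) hk1
  have hφL2' : ∀ i, MemLp (fun w => φ (k + 1) w i) 2 μ := hφL2 (k + 1) hk1
  have hHsm : ∀ p, StronglyMeasurable[G k] fun w => Hf k w p := fun p => (hH p).1
  have hGsm : ∀ p, StronglyMeasurable[G k] fun w => Gf k w p := fun p => (hG2 p).1
  have hHL2 : ∀ p, MemLp (fun w => Hf k w p) 2 μ := fun p => (hH p).2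
  have hGL2 : ∀ p, MemLp (fun w => Gf k w p) 2 μ := fun p => (hG2 p).2
  -- integrability facts
  have hIT : ∀ i j, Integrable (fun w => T (k + 1) w i j) μ :=
    fun i j => Stmt17Aux.integrable_bdd_meas (hTaesm i j) (fun w => hTb w i j)
  have hIwT : ∀ i j, Integrable (fun w => wk k w * T (k + 1) w i j) μ :=
    fun i j => Stmt17Aux.integrable_bdd_mul_left (hwint k) (hTaesm i j)
      (fun w => hTb w i j)
  have hIw2T : ∀ i j, Integrable (fun w => wk k w ^ 2 * T (k + 1) w i j) μ :=
    fun i j => Stmt17Aux.integrable_bdd_mul_left (hw2int k) (hTaesm i j)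
      (fun w => hTb w i j)
  have hIHT : ∀ i j, Integrable (fun w => Hf k w j * T (k + 1) w i j) μ :=
    fun i j => Stmt17Aux.integrable_bdd_mul_left ((hHL2 j).integrable one_le_two)
      (hTaesm i j) (fun w => hTb w i j)
  have hIHwT : ∀ i j, Integrable (fun w => Hf k w j * (wk k w * T (k + 1) w i j)) μ := by
    intro i j
    have base : Integrable (fun w => Hf k w j * wk k w) μ :=
      Stmt17Aux.integrable_mul_L2 (hHL2 j) hwL2
    have := Stmt17Aux.integrable_bdd_mul_left base (hTaesm i j) (fun w => hTb w i j)
    exact this.congr (Filter.Eventually.of_forall fun w => by ring)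
  have hIGwT : ∀ i j, Integrable (fun w => Gf k w j * (wk k w * T (k + 1) w i j)) μ := by
    intro i j
    have base : Integrable (fun w => Gf k w j * wk k w) μ :=
      Stmt17Aux.integrable_mul_L2 (hGL2 j) hwL2
    have := Stmt17Aux.integrable_bdd_mul_left base (hTaesm i j) (fun w => hTb w i j)
    exact this.congr (Filter.Eventually.of_forall fun w => by ring)
  have hIGw2T : ∀ i j, Integrable (fun w => Gf k w j * (wk k w ^ 2 * T (k + 1) w i j)) μ := by
    intro i j
    have habsSM : StronglyMeasurable[G k] fun w => |Gf k w j| := by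
      simpa [Real.norm_eq_abs] using (hGsm j).norm
    have habs : Integrable (fun w => wk k w ^ 2 * |Gf k w j|) μ :=
      Stmt17Aux.integrable_mul_of_condexp_one hGk (hw2int k) (fun w => sq_nonneg _)
        (hw2 k) habsSM ((hGL2 j).integrable one_le_two).abs (fun w => abs_nonneg _)
    refine ((habs.const_mul (max CbT 0)).mono'
      (((hGsm j).mono hGk).aestronglyMeasurable.mul
        ((hwaesm.mul hwaesm).mul (hTaesm i j))) ?_).congr
      (Filter.Eventually.of_forall fun w => by
        simp only [Pi.mul_apply, Pi.pow_apply]; ring)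
    refine Filter.Eventually.of_forall fun w => ?_
    simp only [Pi.mul_apply, Pi.pow_apply]
    rw [Real.norm_eq_abs]
    have h1 : |Gf k w j * (wk k w * wk k w * T (k + 1) w i j)|
        = |Gf k w j| * ((wk k w) ^ 2 * |T (k + 1) w i j|) := by
      rw [abs_mul, abs_mul]
      rw [abs_of_nonneg (a := wk k w * wk k w) (mul_self_nonneg _)]
      ring
    rw [h1]
    calc |Gf k w j| * ((wk k w) ^ 2 * |T (k + 1) w i j|)
        ≤ |Gf k w j| * ((wk k w) ^ 2 * max CbT 0) := by
          refine mul_le_mul_of_nonneg_left ?_ (abs_nonneg _)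
          exact mul_le_mul_of_nonneg_left ((hTb w i j).trans (le_max_left _ _))
            (sq_nonneg _)
      _ = max CbT 0 * (wk k w ^ 2 * |Gf k w j|) := by ring
  have hIφ : ∀ i, Integrable (fun w => φ (k + 1) w i) μ :=
    fun i => (hφL2' i).integrable one_le_two
  have hIwφ : ∀ i, Integrable (fun w => wk k w * φ (k + 1) w i) μ :=
    fun i => Stmt17Aux.integrable_mul_L2 hwL2 (hφL2' i)
  -- decompositions of the terminal pairing
  have heq1 : (fun v => T (k + 1) v *ᵥ x (k + 1) v + φ (k + 1) v)
      = fun v => T (k + 1) v *ᵥ Hf k v + (wk k v • T (k + 1) v) *ᵥ Gf k v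
        + φ (k + 1) v := by
    funext v
    rw [hxdec k hk v, Matrix.mulVec_add, Matrix.mulVec_smul,
      ← Matrix.smul_mulVec]
  have heq2 : (fun v => wk k v • (T (k + 1) v *ᵥ x (k + 1) v + φ (k + 1) v))
      = fun v => (wk k v • T (k + 1) v) *ᵥ Hf k v
        + (wk k v ^ 2 • T (k + 1) v) *ᵥ Gf k v + wk k v • φ (k + 1) v := by
    funext v
    rw [hxdec k hk v, Matrix.mulVec_add, Matrix.mulVec_smul]
    rw [smul_add, smul_add, smul_smul, ← sq, ← Matrix.smul_mulVec,
      ← Matrix.smul_mulVec]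
  -- conditional expectation computations
  have hy1 := Stmt17Aux.cexpV_combo (μ := μ) hGk (T (k + 1))
    (fun v => wk k v • T (k + 1) v) (Hf k) (Gf k) (φ (k + 1)) hHsm hGsm
    hIT (fun i j => hIwT i j) hIHT (fun i j => hIGwT i j) hIφ
  have hy2 := Stmt17Aux.cexpV_combo (μ := μ) hGk (fun v => wk k v • T (k + 1) v)
    (fun v => wk k v ^ 2 • T (k + 1) v) (Hf k) (Gf k)
    (fun v => wk k v • φ (k + 1) v) hHsm hGsm (fun i j => hIwT i j)
    (fun i j => hIw2T i j) (fun i j => hIHwT i j) (fun i j => hIGw2T i j)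
    (fun i => hIwφ i)
  have hy1' : cexpV μ (G k) (fun v => T (k + 1) v *ᵥ Hf k v
        + (wk k v • T (k + 1) v) *ᵥ Gf k v + φ (k + 1) v) =ᵐ[μ]
      fun w => cexpM μ (G k) (T (k + 1)) w *ᵥ Hf k w
        + cexpM μ (G k) (fun v => wk k v • T (k + 1) v) w *ᵥ Gf k w
        + cexpV μ (G k) (φ (k + 1)) w := hy1
  have hy2' : cexpV μ (G k) (fun v => (wk k v • T (k + 1) v) *ᵥ Hf k v
        + (wk k v ^ 2 • T (k + 1) v) *ᵥ Gf k v + wk k v • φ (k + 1) v) =ᵐ[μ]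
      fun w => cexpM μ (G k) (fun v => wk k v • T (k + 1) v) w *ᵥ Hf k w
        + cexpM μ (G k) (fun v => wk k v ^ 2 • T (k + 1) v) w *ᵥ Gf k w
        + cexpV μ (G k) (fun v => wk k v • φ (k + 1) v) w := hy2
  rw [heq1, heq2]
  filter_upwards [hy1', hy2', hgain k hk, hoff k hk] with w e1 e2 egain eoff
  rw [e1, e2]
  have key : (B k w)ᵀ *ᵥ (cexpM μ (G k) (T (k + 1)) w *ᵥ Hf k w
        + cexpM μ (G k) (fun v => wk k v • T (k + 1) v) w *ᵥ Gf k w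
        + cexpV μ (G k) (φ (k + 1)) w)
      + (E k w)ᵀ *ᵥ (cexpM μ (G k) (fun v => wk k v • T (k + 1) v) w *ᵥ Hf k w
        + cexpM μ (G k) (fun v => wk k v ^ 2 • T (k + 1) v) w *ᵥ Gf k w
        + cexpV μ (G k) (fun v => wk k v • φ (k + 1) v) w)
      + L k w *ᵥ x k w + R k w *ᵥ (P1s k w *ᵥ x k w + S1s k w) + ρ k w
      = (LamOp μ (G k) (wk k) (L k) (A k) (D k) (B k) (E k) (C k) (F k) (P2s k)
            (T (k + 1)) w
          + UpsOp μ (G k) (wk k) (R k) (B k) (E k) (T (k + 1)) w * P1s k w) *ᵥ x k w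
        + (UpsOp μ (G k) (wk k) (R k) (B k) (E k) (T (k + 1)) w *ᵥ S1s k w
          + PhiOp μ (G k) (wk k) (ρ k) (B k) (E k) (C k) (F k) (bb k) (sg k)
              (S2s k) (T (k + 1)) (φ (k + 1)) w) := by
    rw [hHf, hGf]
    simp only [LamOp, UpsOp, PhiOp, Matrix.add_mulVec, Matrix.mulVec_add,
      Matrix.add_mul, Matrix.mul_add, ← Matrix.mulVec_mulVec]
    abel
  exact key.trans (by rw [egain, eoff]; simp)
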